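/- Let S be a finite set of points in ℝ^d in general position. Then there exists an orthogonal linear map A : ℝ^d → ℝ^d such that the image A(S) has the strong general position property (SGPP): A(S) is in general position and, for every k ≥ 1 with d − 2k ≥ 1, the image of A(S) under the coordinate projection onto the last d − 2k coordinates is in general position in ℝ^{d−2k}. -/

import Mathlib

open scoped RealInnerProductSpace

/-- A set of points of `ℝ^d` is in general position if every subset of at most `d + 1`
of its points is affinely independent. -/
def InGenPos (d : ℕ) (P : Set (EuclideanSpace ℝ (Fin d))) : Prop :=
  ∀ s : Finset (EuclideanSpace ℝ (Fin d)), ↑s ⊆ P → s.card ≤ d + 1 →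
    AffineIndependent ℝ (fun x : s => (x : EuclideanSpace ℝ (Fin d)))

/-- Coordinate projection of `ℝ^d` onto the last `d - 2k` coordinates. -/
noncomputable def proj2k (d k : ℕ) (x : EuclideanSpace ℝ (Fin d)) :
    EuclideanSpace ℝ (Fin (d - 2 * k)) :=
  WithLp.toLp 2 (fun i : Fin (d - 2 * k) => x ⟨(i : ℕ) + 2 * k, by omega⟩)

/-- The strong general position property (SGPP): the set is in general position and so is
its coordinate projection onto the last `d − 2k` coordinates for every `k ≥ 1` with
`d − 2k ≥ 1`. -/
def SGPP (d : ℕ) (P : Set (EuclideanSpace ℝ (Fin d))) : Prop :=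
  InGenPos d P ∧
    ∀ k : ℕ, 1 ≤ k → 1 ≤ d - 2 * k → InGenPos (d - 2 * k) (proj2k d k '' P)

open scoped Matrix

namespace Stmt16


/-- Polynomial functions on `ι → ℝ`. -/
def PolyFun {ι : Type*} (f : (ι → ℝ) → ℝ) : Prop :=
  ∃ p : MvPolynomial ι ℝ, ∀ x, f x = MvPolynomial.eval x p

namespace PolyFun

variable {ι : Type*}

lemma const (c : ℝ) : PolyFun (fun _ : ι → ℝ => c) := ⟨MvPolynomial.C c, by simp⟩

lemma coord (i : ι) : PolyFun (fun x : ι → ℝ => x i) := ⟨MvPolynomial.X i, by simp⟩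

lemma add {f g : (ι → ℝ) → ℝ} (hf : PolyFun f) (hg : PolyFun g) :
    PolyFun (fun x => f x + g x) := by
  obtain ⟨p, hp⟩ := hf; obtain ⟨q, hq⟩ := hg
  exact ⟨p + q, fun x => by simp [hp, hq]⟩

lemma mul {f g : (ι → ℝ) → ℝ} (hf : PolyFun f) (hg : PolyFun g) :
    PolyFun (fun x => f x * g x) := by
  obtain ⟨p, hp⟩ := hf; obtain ⟨q, hq⟩ := hg
  exact ⟨p * q, fun x => by simp [hp, hq]⟩

lemma sub {f g : (ι → ℝ) → ℝ} (hf : PolyFun f) (hg : PolyFun g) :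
    PolyFun (fun x => f x - g x) := by
  obtain ⟨p, hp⟩ := hf; obtain ⟨q, hq⟩ := hg
  exact ⟨p - q, fun x => by simp [hp, hq]⟩

lemma sum {α : Type*} (s : Finset α) (f : α → (ι → ℝ) → ℝ)
    (h : ∀ a ∈ s, PolyFun (f a)) : PolyFun (fun x => ∑ a ∈ s, f a x) := by
  classical
  induction s using Finset.induction with
  | empty => simpa using const 0
  | @insert a s' hx ih =>
    simp only [Finset.sum_insert hx]
    exact (h a (Finset.mem_insert_self a s')).add
      (ih fun b hb => h b (Finset.mem_insert_of_mem hb))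

lemma prod {α : Type*} (s : Finset α) (f : α → (ι → ℝ) → ℝ)
    (h : ∀ a ∈ s, PolyFun (f a)) : PolyFun (fun x => ∏ a ∈ s, f a x) := by
  classical
  induction s using Finset.induction with
  | empty => simpa using const 1
  | @insert a s' hx ih =>
    simp only [Finset.prod_insert hx]
    exact (h a (Finset.mem_insert_self a s')).mul
      (ih fun b hb => h b (Finset.mem_insert_of_mem hb))

lemma det {n : ℕ} (M : Fin n → Fin n → ((ι → ℝ) → ℝ))
    (h : ∀ i j, PolyFun (M i j)) :
    PolyFun (fun x => Matrix.det (Matrix.of fun i j => M i j x)) := by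
  classical
  have : ∀ x, Matrix.det (Matrix.of fun i j => M i j x) =
      ∑ σ ∈ (Finset.univ : Finset (Equiv.Perm (Fin n))),
        ((Equiv.Perm.sign σ : ℤ) : ℝ) * ∏ i, M (σ i) i x := by
    intro x; rw [Matrix.det_apply']; rfl
  simp only [this]
  exact sum _ _ fun σ _ => (const _).mul (prod _ _ fun i _ => h _ _)

/-- Finitely many polynomial functions, each not identically zero, have a common
non-vanishing point. -/
lemma exists_forall_ne_zero {J : Type*} (s : Finset J) (f : J → (ι → ℝ) → ℝ)
    (hp : ∀ j ∈ s, PolyFun (f j)) (hne : ∀ j ∈ s, ∃ x, f j x ≠ 0) :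
    ∃ x, ∀ j ∈ s, f j x ≠ 0 := by
  classical
  choose p hp using hp
  have hq : ∀ x, MvPolynomial.eval x (∏ j ∈ s.attach, p j j.2) = ∏ j ∈ s.attach, f j x := by
    intro x; rw [map_prod]; exact Finset.prod_congr rfl fun j _ => (hp j j.2 x).symm
  have hqne : (∏ j ∈ s.attach, p j j.2) ≠ 0 := by
    apply Finset.prod_ne_zero_iff.2
    intro j _
    obtain ⟨x, hx⟩ := hne j j.2
    intro h0
    rw [hp j j.2 x, h0] at hx; simp at hx
  have : ∃ x, MvPolynomial.eval x (∏ j ∈ s.attach, p j j.2) ≠ 0 := by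
    by_contra h
    push_neg at h
    exact hqne (MvPolynomial.funext fun x => by rw [h x]; simp)
  obtain ⟨x, hx⟩ := this
  refine ⟨x, fun j hj => ?_⟩
  rw [hq] at hx
  intro h0
  exact hx (Finset.prod_eq_zero (Finset.mem_attach s ⟨j, hj⟩) h0)

end PolyFun


variable {d : ℕ}

abbrev E (d : ℕ) := EuclideanSpace ℝ (Fin d)

lemma inner_euc (a b : E d) : ⟪a, b⟫ = ∑ c, a c * b c := by
  simp [PiLp.inner_apply, RCLike.inner_apply, mul_comm]

/-- The "Gram matrix with custom last row" used to define determinant Gram-Schmidt. -/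
noncomputable def gsM (w : Fin d → E d) (r : Fin d) (ρ : Fin (r.1 + 1) → ℝ) :
    Matrix (Fin (r.1 + 1)) (Fin (r.1 + 1)) ℝ :=
  Matrix.of fun i j =>
    if (i : ℕ) < r.1 then ⟪w (Fin.castLE r.isLt i), w (Fin.castLE r.isLt j)⟫
    else ρ j

lemma gsM_eq_update (w : Fin d → E d) (r : Fin d) (ρ ρ' : Fin (r.1 + 1) → ℝ) :
    gsM w r ρ = (gsM w r ρ').updateRow (Fin.last r.1) ρ := by
  ext i j
  rcases eq_or_ne i (Fin.last r.1) with h | h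
  · subst h
    simp [gsM, Matrix.updateRow_self]
  · have hi : (i : ℕ) < r.1 := by
      have := Fin.lt_last_iff_ne_last.2 h
      exact this
    rw [Matrix.updateRow_ne h]
    simp [gsM, hi]

lemma det_updateRow_sum' {n : ℕ} (M : Matrix (Fin n) (Fin n) ℝ) (j : Fin n)
    {α : Type*} (s : Finset α) (g : α → Fin n → ℝ) (c : α → ℝ) :
    (M.updateRow j (∑ a ∈ s, c a • g a)).det = ∑ a ∈ s, c a * (M.updateRow j (g a)).det := by
  classical
  induction s using Finset.induction with
  | empty =>
    simp only [Finset.sum_empty]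
    exact Matrix.det_eq_zero_of_row_eq_zero j (fun k => by simp)
  | @insert a s' hx ih =>
    simp only [Finset.sum_insert hx]
    rw [Matrix.det_updateRow_add, Matrix.det_updateRow_smul, ih]

/-- The (unnormalized, polynomial) Gram–Schmidt vectors. -/
noncomputable def gsV (w : Fin d → E d) (r : Fin d) : E d :=
  WithLp.toLp 2 (fun c => (gsM w r (fun j => w (Fin.castLE r.isLt j) c)).det)

lemma inner_gsV (w : Fin d → E d) (r : Fin d) (x : E d) :
    ⟪gsV w r, x⟫ = (gsM w r (fun j => ⟪w (Fin.castLE r.isLt j), x⟫)).det := by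
  rw [inner_euc]
  have hrow : (fun j => ⟪w (Fin.castLE r.isLt j), x⟫) =
      ∑ c, x c • (fun j : Fin (r.1+1) => w (Fin.castLE r.isLt j) c) := by
    funext j
    rw [inner_euc]
    simp only [Finset.sum_apply, Pi.smul_apply, smul_eq_mul]
    exact Finset.sum_congr rfl fun c _ => by ring
  rw [gsM_eq_update w r _ (0 : Fin (r.1+1) → ℝ), hrow, det_updateRow_sum']
  refine Finset.sum_congr rfl fun c _ => ?_
  rw [mul_comm]
  congr 1
  show ((gsM w r fun j => w (Fin.castLE r.isLt j) c)).det = _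
  rw [gsM_eq_update w r _ (0 : Fin (r.1+1) → ℝ)]

lemma inner_gsV_w (w : Fin d → E d) (r : Fin d) (s : Fin d) (hs : (s : ℕ) < (r : ℕ)) :
    ⟪gsV w r, w s⟫ = 0 := by
  rw [inner_gsV]
  have hlt : (s : ℕ) < r.1 + 1 := by omega
  refine Matrix.det_zero_of_row_eq (i := (⟨s.1, hlt⟩ : Fin (r.1+1))) (j := Fin.last r.1)
    (by simp [Fin.ext_iff]; omega) ?_
  funext j
  have hcast : Fin.castLE r.isLt (⟨s.1, hlt⟩ : Fin (r.1+1)) = s := by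
    simp [Fin.ext_iff]
  simp only [gsM, Matrix.of_apply, hcast]
  rw [if_pos (by simpa using hs)]
  have : ¬ ((Fin.last r.1 : ℕ) < r.1) := by simp
  rw [if_neg this]
  exact real_inner_comm _ _

/-- cofactor coefficients of the Laplace expansion of `gsV` along the last row. -/
noncomputable def gsCoef (w : Fin d → E d) (s : Fin d) (j : Fin (s.1 + 1)) : ℝ :=
  (-1 : ℝ) ^ (s.1 + (j : ℕ)) *
    ((gsM w s 0).submatrix (Fin.last s.1).succAbove j.succAbove).det

lemma gsM_submatrix (w : Fin d → E d) (s : Fin d) (ρ : Fin (s.1+1) → ℝ) (j : Fin (s.1+1)) :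
    (gsM w s ρ).submatrix (Fin.last s.1).succAbove j.succAbove =
      (gsM w s 0).submatrix (Fin.last s.1).succAbove j.succAbove := by
  funext i' j'
  have h1 : ((Fin.last s.1).succAbove i' : ℕ) < s.1 := by
    have := Fin.succAbove_ne (Fin.last s.1) i'
    have h2 := ((Fin.last s.1).succAbove i').isLt
    have h3 : ((Fin.last s.1).succAbove i' : ℕ) ≠ s.1 := by
      intro h; exact this (Fin.ext_iff.2 (by simpa using h))
    omega
  simp [gsM, h1]

lemma gsV_apply (w : Fin d → E d) (s : Fin d) (c : Fin d) :
    gsV w s c = ∑ j : Fin (s.1+1), gsCoef w s j * w (Fin.castLE s.isLt j) c := by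
  show (gsM w s (fun j => w (Fin.castLE s.isLt j) c)).det = _
  rw [Matrix.det_succ_row _ (Fin.last s.1)]
  refine Finset.sum_congr rfl fun j _ => ?_
  rw [gsM_submatrix]
  have hentry : gsM w s (fun j => w (Fin.castLE s.isLt j) c) (Fin.last s.1) j
      = w (Fin.castLE s.isLt j) c := by
    simp [gsM]
  rw [hentry]
  simp only [gsCoef, Fin.val_last]
  ring

lemma inner_gsV_gsV (w : Fin d → E d) (r s : Fin d) (hs : (s : ℕ) < (r : ℕ)) :
    ⟪gsV w r, gsV w s⟫ = 0 := by
  rw [inner_euc]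
  have : ∀ c, gsV w r c * gsV w s c
      = ∑ j : Fin (s.1+1), gsCoef w s j * (gsV w r c * w (Fin.castLE s.isLt j) c) := by
    intro c
    rw [gsV_apply w s c, Finset.mul_sum]
    exact Finset.sum_congr rfl fun j _ => by ring
  simp only [this]
  rw [Finset.sum_comm]
  refine Finset.sum_eq_zero fun j _ => ?_
  rw [← Finset.mul_sum]
  have : ∑ c, gsV w r c * w (Fin.castLE s.isLt j) c = ⟪gsV w r, w (Fin.castLE s.isLt j)⟫ := by
    rw [inner_euc]
  rw [this, inner_gsV_w w r _ (by simpa using lt_of_le_of_lt (Nat.lt_succ_iff.1 j.isLt) hs),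
    mul_zero]

lemma gsV_of_orthonormal (w : Fin d → E d) (hw : Orthonormal ℝ w) (r : Fin d) :
    gsV w r = w r := by
  have hite := orthonormal_iff_ite.1 hw
  refine PiLp.ext fun c => ?_
  show (gsM w r (fun j => w (Fin.castLE r.isLt j) c)).det = _
  rw [Matrix.det_succ_row _ (Fin.last r.1)]
  rw [Finset.sum_eq_single (Fin.last r.1)]
  · have hm : (gsM w r (fun j => w (Fin.castLE r.isLt j) c)).submatrix
        (Fin.last r.1).succAbove (Fin.last r.1).succAbove = 1 := by
      funext i' j'
      have h1 : ((Fin.last r.1).succAbove i' : ℕ) < r.1 := by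
        simpa [Fin.succAbove_last, Fin.castSucc] using i'.isLt
      simp only [Matrix.submatrix_apply, gsM, Matrix.of_apply, if_pos h1, hite]
      have : (Fin.castLE r.isLt ((Fin.last r.1).succAbove i')
          = Fin.castLE r.isLt ((Fin.last r.1).succAbove j')) ↔ i' = j' := by
        simp [Fin.ext_iff, Fin.succAbove_last]
      rw [Matrix.one_apply]
      simp only [this]
    rw [hm, Matrix.det_one]
    have hentry : gsM w r (fun j => w (Fin.castLE r.isLt j) c) (Fin.last r.1) (Fin.last r.1)
        = w r c := by
      have : Fin.castLE r.isLt (Fin.last r.1) = r := by simp [Fin.ext_iff]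
      simp [gsM, this]
    rw [hentry]
    simp [Fin.val_last]
  · intro j _ hj
    have hjlt : (j : ℕ) < r.1 := by
      have := j.isLt
      have : (j : ℕ) ≠ r.1 := fun h => hj (by simp [Fin.ext_iff, h])
      omega
    have : ((gsM w r (fun j => w (Fin.castLE r.isLt j) c)).submatrix
        (Fin.last r.1).succAbove j.succAbove).det = 0 := by
      refine Matrix.det_eq_zero_of_row_eq_zero (⟨j.1, hjlt⟩ : Fin r.1) fun k => ?_
      have h1 : ((Fin.last r.1).succAbove (⟨j.1, hjlt⟩ : Fin r.1) : ℕ) < r.1 := by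
        simpa [Fin.succAbove_last] using hjlt
      simp only [Matrix.submatrix_apply, gsM, Matrix.of_apply, if_pos h1, hite]
      have hne : Fin.castLE r.isLt ((Fin.last r.1).succAbove (⟨j.1, hjlt⟩ : Fin r.1))
          ≠ Fin.castLE r.isLt (j.succAbove k) := by
        have h2 : (j.succAbove k : ℕ) ≠ (j : ℕ) := by
          intro h
          exact Fin.succAbove_ne j k (Fin.ext_iff.2 h)
        intro hcast
        have hval := congrArg Fin.val hcast
        simp [Fin.succAbove_last] at hval
        exact h2 hval.symm
      simp [hne]
    rw [this]
    ring
  · simp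

lemma inner_gsV_self_of_orthonormal (w : Fin d → E d) (hw : Orthonormal ℝ w) (r : Fin d) :
    ⟪gsV w r, gsV w r⟫ = 1 := by
  rw [gsV_of_orthonormal w hw r]
  simpa using orthonormal_iff_ite.1 hw r r


lemma det_transpose_mul_self_ne_zero_iff {n m : ℕ} (M : Matrix (Fin n) (Fin m) ℝ) :
    (Mᵀ * M).det ≠ 0 ↔ ∀ c : Fin m → ℝ, M.mulVec c = 0 → c = 0 := by
  constructor
  · intro hdet c hc
    have hu : IsUnit (Mᵀ * M) := (Matrix.isUnit_iff_isUnit_det _).2 (isUnit_iff_ne_zero.2 hdet)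
    have hinj := Matrix.mulVec_injective_iff_isUnit.2 hu
    apply hinj
    rw [← Matrix.mulVec_mulVec, hc, Matrix.mulVec_zero, Matrix.mulVec_zero]
  · intro h
    have hker : ∀ e : Fin m → ℝ, (Mᵀ * M).mulVec e = 0 → e = 0 := by
      intro e he
      have hy : dotProduct (M.mulVec e) (M.mulVec e) = 0 := by
        have h1 : dotProduct (M.mulVec e) (M.mulVec e)
            = dotProduct e ((Mᵀ * M).mulVec e) := by
          conv_rhs => rw [← Matrix.mulVec_mulVec, Matrix.dotProduct_mulVec,
            Matrix.vecMul_transpose]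
        rw [h1, he, dotProduct_zero]
      have hz : M.mulVec e = 0 := by
        funext a
        have hnn : ∀ a ∈ (Finset.univ : Finset (Fin n)),
            0 ≤ M.mulVec e a * M.mulVec e a := fun a _ => mul_self_nonneg _
        have := (Finset.sum_eq_zero_iff_of_nonneg hnn).1 hy a (Finset.mem_univ a)
        exact mul_self_eq_zero.1 this
      exact h e hz
    have hinj : Function.Injective (Mᵀ * M).mulVec := by
      intro a b hab
      have : (Mᵀ * M).mulVec (a - b) = 0 := by
        rw [Matrix.mulVec_sub, hab, sub_self]
      have := hker _ this
      exact sub_eq_zero.1 this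
    have hu : IsUnit (Mᵀ * M) := Matrix.mulVec_injective_iff_isUnit.1 hinj
    exact isUnit_iff_ne_zero.1 ((Matrix.isUnit_iff_isUnit_det _).1 hu)

lemma affine_transfer {D : ℕ} (φ : E d → EuclideanSpace ℝ (Fin D))
    (S : Finset (E d)) (s : Finset (EuclideanSpace ℝ (Fin D))) (hs : ↑s ⊆ φ '' ↑S)
    (H : ∀ T : Finset (E d), T ⊆ S → T.card = s.card →
      AffineIndependent ℝ (fun i : Fin T.card => φ (T.equivFin.symm i : E d))) :
    AffineIndependent ℝ (fun y : s => (y : EuclideanSpace ℝ (Fin D))) := by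
  classical
  have hex : ∀ y : {y // y ∈ s}, ∃ x, x ∈ S ∧ φ x = (y : EuclideanSpace ℝ (Fin D)) := by
    intro y
    obtain ⟨x, hx, hxy⟩ := hs y.2
    exact ⟨x, hx, hxy⟩
  choose G hG1 hG2 using hex
  have hGinj : Function.Injective G := by
    intro y y' hGe
    have : φ (G y) = φ (G y') := by rw [hGe]
    rw [hG2, hG2] at this
    exact Subtype.ext this
  set T : Finset (E d) := Finset.image G Finset.univ with hT
  have hTS : T ⊆ S := by
    intro x hx
    rw [hT, Finset.mem_image] at hx
    obtain ⟨y, _, rfl⟩ := hx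
    exact hG1 y
  have hcard : T.card = s.card := by
    rw [hT, Finset.card_image_of_injective _ hGinj, Finset.card_univ, Fintype.card_coe]
  have hφT : ∀ x ∈ T, φ x ∈ s := by
    intro x hx
    rw [hT, Finset.mem_image] at hx
    obtain ⟨y, _, rfl⟩ := hx
    rw [hG2]
    exact y.2
  have hφinj : ∀ x ∈ T, ∀ x' ∈ T, φ x = φ x' → x = x' := by
    intro x hx x' hx'
    rw [hT, Finset.mem_image] at hx hx'
    obtain ⟨y, _, rfl⟩ := hx
    obtain ⟨y', _, rfl⟩ := hx'
    rw [hG2, hG2]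
    intro hyy
    have : y = y' := Subtype.ext hyy
    rw [this]
  have hmemT : ∀ i : Fin T.card, ((T.equivFin.symm i : E d)) ∈ T := fun i => (T.equivFin.symm i).2
  let ψ : Fin T.card → {y // y ∈ s} := fun i => ⟨φ (T.equivFin.symm i : E d), hφT _ (hmemT i)⟩
  have hψinj : Function.Injective ψ := by
    intro i j hij
    have h1 : φ (T.equivFin.symm i : E d) = φ (T.equivFin.symm j : E d) :=
      congrArg Subtype.val hij
    have h2 : (T.equivFin.symm i : E d) = (T.equivFin.symm j : E d) :=
      hφinj _ (hmemT i) _ (hmemT j) h1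
    have h3 : T.equivFin.symm i = T.equivFin.symm j := Subtype.ext h2
    exact T.equivFin.symm.injective h3
  have hψbij : Function.Bijective ψ :=
    (Fintype.bijective_iff_injective_and_card ψ).2 ⟨hψinj, by simp [Fintype.card_coe, hcard]⟩
  let eqv := Equiv.ofBijective ψ hψbij
  have hre : (fun y : {y // y ∈ s} => (y : EuclideanSpace ℝ (Fin D)))
      = (fun i : Fin T.card => φ (T.equivFin.symm i : E d)) ∘ eqv.symm := by
    funext y
    have h4 : ψ (eqv.symm y) = y := eqv.apply_symm_apply y
    calc (y : EuclideanSpace ℝ (Fin D)) = ((ψ (eqv.symm y)) : EuclideanSpace ℝ (Fin D)) := by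
          rw [h4]
    _ = φ (T.equivFin.symm (eqv.symm y) : E d) := rfl
  rw [hre]
  exact (affineIndependent_equiv eqv.symm).2 (H T hTS hcard)


set_option maxHeartbeats 1000000 in
lemma exists_witness_frame {mm kk : ℕ} (u : Fin mm → E d) (hu : LinearIndependent ℝ u)
    (hmk : mm + 2 * kk ≤ d) :
    ∃ w : Fin d → E d, Orthonormal ℝ w ∧
      ∀ c : Fin mm → ℝ, (∀ a : Fin d, 2 * kk ≤ (a : ℕ) → ⟪w a, ∑ i, c i • u i⟫ = 0) →
        c = 0 := by
  classical
  set V := Submodule.span ℝ (Set.range u) with hV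
  have hmV : Module.finrank ℝ V = mm := by
    rw [hV, finrank_span_eq_card hu, Fintype.card_fin]
  have hrk : Module.finrank ℝ (E d) = d := finrank_euclideanSpace_fin
  have hperp : Module.finrank ℝ Vᗮ = d - mm := by
    have := Submodule.finrank_add_finrank_orthogonal (K := V)
    omega
  have hmd : mm ≤ d := by omega
  let g : OrthonormalBasis (Fin (d - mm)) ℝ Vᗮ :=
    (stdOrthonormalBasis ℝ Vᗮ).reindex (finCongr hperp)
  let h : OrthonormalBasis (Fin mm) ℝ V :=
    (stdOrthonormalBasis ℝ V).reindex (finCongr hmV)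
  let w : Fin d → E d := fun i =>
    if hi : (i : ℕ) < d - mm then (g ⟨i.1, hi⟩ : E d)
    else (h ⟨i.1 - (d - mm), by have := i.isLt; omega⟩ : E d)
  have hgite := orthonormal_iff_ite.1 g.orthonormal
  have hhite := orthonormal_iff_ite.1 h.orthonormal
  have hworth : Orthonormal ℝ w := by
    rw [orthonormal_iff_ite]
    intro i j
    by_cases hi : (i : ℕ) < d - mm <;> by_cases hj : (j : ℕ) < d - mm
    · have := hgite ⟨i.1, hi⟩ ⟨j.1, hj⟩
      rw [Submodule.coe_inner] at this
      simp only [w, dif_pos hi, dif_pos hj]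
      rw [this]
      have : ((⟨i.1, hi⟩ : Fin (d - mm)) = ⟨j.1, hj⟩) ↔ i = j := by
        simp [Fin.ext_iff]
      simp [this]
    · have hij : i ≠ j := fun hcon => hj (hcon ▸ hi)
      simp only [w, dif_pos hi, dif_neg hj]
      rw [if_neg hij]
      exact Submodule.inner_left_of_mem_orthogonal (K := V) (Submodule.coe_mem _)
        (Submodule.coe_mem _)
    · have hij : i ≠ j := fun hcon => hi (hcon ▸ hj)
      simp only [w, dif_neg hi, dif_pos hj]
      rw [if_neg hij]
      exact Submodule.inner_right_of_mem_orthogonal (K := V) (Submodule.coe_mem _)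
        (Submodule.coe_mem _)
    · have := hhite ⟨i.1 - (d - mm), by have := i.isLt; omega⟩ ⟨j.1 - (d - mm), by
        have := j.isLt; omega⟩
      rw [Submodule.coe_inner] at this
      simp only [w, dif_neg hi, dif_neg hj]
      rw [this]
      have heq : ((⟨i.1 - (d - mm), by have := i.isLt; omega⟩ : Fin mm)
          = ⟨j.1 - (d - mm), by have := j.isLt; omega⟩) ↔ i = j := by
        simp only [Fin.ext_iff]
        omega
      simp [heq]
  refine ⟨w, hworth, ?_⟩
  intro c hc
  set y : E d := ∑ i, c i • u i with hy
  have hyV : y ∈ V := by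
    refine Submodule.sum_mem _ fun i _ => Submodule.smul_mem _ _ ?_
    exact Submodule.subset_span (Set.mem_range_self i)
  have hhy : ∀ b : Fin mm, ⟪(h b : E d), y⟫ = 0 := by
    intro b
    have hlt : d - mm + b.1 < d := by have := b.isLt; omega
    have h2k : 2 * kk ≤ ((⟨d - mm + b.1, hlt⟩ : Fin d) : ℕ) := by
      simp only []
      omega
    have := hc ⟨d - mm + b.1, hlt⟩ h2k
    have hw : w ⟨d - mm + b.1, hlt⟩ = (h b : E d) := by
      have hni : ¬ ((⟨d - mm + b.1, hlt⟩ : Fin d) : ℕ) < d - mm := by simp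
      simp only [w, dif_neg hni]
      congr 1
      simp [Fin.ext_iff]
    rw [hw] at this
    exact this
  have hy0 : y = 0 := by
    have hrepr : h.repr ⟨y, hyV⟩ = 0 := by
      ext b
      rw [h.repr_apply_apply]
      have : ⟪h b, (⟨y, hyV⟩ : V)⟫ = ⟪(h b : E d), y⟫ := rfl
      rw [this, hhy b]
      rfl
    have hz : (⟨y, hyV⟩ : V) = 0 := h.repr.map_eq_zero_iff.1 hrepr
    exact congrArg Subtype.val hz
  have := Fintype.linearIndependent_iff.1 hu c (by rw [← hy, hy0])
  funext i
  exact this i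


lemma eucl_sum_apply {D : ℕ} {α : Type*} (s : Finset α) (f : α → EuclideanSpace ℝ (Fin D))
    (a : Fin D) : (∑ i ∈ s, f i) a = ∑ i ∈ s, f i a := by
  classical
  induction s using Finset.induction with
  | empty => rfl
  | @insert b s' hb ih =>
    rw [Finset.sum_insert hb, Finset.sum_insert hb, ← ih]
    rfl

/-- From invertibility of the coordinate matrix, affine independence. -/
lemma affine_of_matrix {N D : ℕ} (p : Fin (N + 1) → EuclideanSpace ℝ (Fin D))
    (M : Matrix (Fin D) (Fin N) ℝ) (c : Fin D → ℝ) (hc : ∀ a, c a ≠ 0)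
    (hM : ∀ cv : Fin N → ℝ, M.mulVec cv = 0 → cv = 0)
    (hpM : ∀ (j : Fin N) (a : Fin D), (p j.succ - p 0) a = c a * M a j) :
    AffineIndependent ℝ p := by
  rw [affineIndependent_iff_of_fintype]
  intro ω hω hws
  have hsum : ∑ i, ω i • (p i - p 0) = 0 := by
    rw [Finset.weightedVSub_eq_weightedVSubOfPoint_of_sum_eq_zero _ ω p hω (p 0),
      Finset.weightedVSubOfPoint_apply] at hws
    simpa [vsub_eq_sub] using hws
  have hcoord : ∀ a : Fin D, ∑ i, ω i * (p i - p 0) a = 0 := by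
    intro a
    have := congrArg (fun z : EuclideanSpace ℝ (Fin D) => z a) hsum
    simp only at this
    rw [eucl_sum_apply] at this
    simpa [PiLp.smul_apply, smul_eq_mul] using this
  have hMv : M.mulVec (fun j => ω j.succ) = 0 := by
    funext a
    have h2 : c a * (M.mulVec (fun j => ω j.succ)) a = 0 := by
      have h3 := hcoord a
      rw [Fin.sum_univ_succ] at h3
      have h4 : ω 0 * (p 0 - p 0) a = 0 := by simp [PiLp.sub_apply]
      rw [h4, zero_add] at h3
      calc c a * (M.mulVec (fun j => ω j.succ)) a
          = ∑ j : Fin N, ω j.succ * (c a * M a j) := by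
            rw [Matrix.mulVec, dotProduct, Finset.mul_sum]
            exact Finset.sum_congr rfl fun j _ => by ring
        _ = ∑ j : Fin N, ω j.succ * (p j.succ - p 0) a := by
            exact Finset.sum_congr rfl fun j _ => by rw [hpM j a]
        _ = 0 := h3
    exact (mul_eq_zero.1 h2).resolve_left (hc a)
  have hz := hM _ hMv
  intro i
  rcases Fin.eq_zero_or_eq_succ i with rfl | ⟨j, rfl⟩
  · have h5 : ∑ i, ω i = ω 0 + ∑ j : Fin N, ω j.succ := Fin.sum_univ_succ ω
    have h6 : ∀ j : Fin N, ω j.succ = 0 := fun j => congrFun hz j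
    rw [hω] at h5
    simpa [h6] using h5.symm
  · exact congrFun hz j

noncomputable def worow {d : ℕ} (x : Fin d × Fin d → ℝ) : Fin d → E d := fun i => WithLp.toLp 2 (fun c => x (i, c))

noncomputable def ptT (T : Finset (E d)) (n : ℕ) : E d :=
  if h : n < T.card then (T.equivFin.symm ⟨n, h⟩ : E d) else 0

noncomputable def uT (T : Finset (E d)) : Fin (T.card - 1) → E d :=
  fun i => ptT T (i.1 + 1) - ptT T 0

noncomputable def Mmat (k : ℕ) (T : Finset (E d)) (w : Fin d → E d) :
    Matrix (Fin (d - 2 * k)) (Fin (T.card - 1)) ℝ :=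
  Matrix.of fun a i =>
    if h : (a : ℕ) + 2 * k < d then ⟪gsV w ⟨(a : ℕ) + 2 * k, h⟩, uT T i⟫ else 0

noncomputable def condF (k : ℕ) (T : Finset (E d)) : (Fin d × Fin d → ℝ) → ℝ :=
  fun x =>
    (∏ r : Fin d, ⟪gsV (worow x) r, gsV (worow x) r⟫) *
      ((Mmat k T (worow x))ᵀ * Mmat k T (worow x)).det

lemma polyFun_gsV_apply (r c : Fin d) :
    PolyFun (fun x : Fin d × Fin d → ℝ => gsV (worow x) r c) := by
  have hrw : ∀ x : Fin d × Fin d → ℝ, gsV (worow x) r c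
      = Matrix.det (Matrix.of fun i j : Fin (r.1 + 1) =>
          (fun i j : Fin (r.1 + 1) => if (i : ℕ) < r.1
            then (fun y : Fin d × Fin d → ℝ =>
              ∑ c' : Fin d, y (Fin.castLE r.isLt i, c') * y (Fin.castLE r.isLt j, c'))
            else (fun y : Fin d × Fin d → ℝ => y (Fin.castLE r.isLt j, c))) i j x) := by
    intro x
    show (gsM (worow x) r _).det = _
    congr 1
    funext i j
    by_cases h : (i : ℕ) < r.1
    · simp only [gsM, Matrix.of_apply, if_pos h, inner_euc]
      rfl
    · simp only [gsM, Matrix.of_apply, if_neg h]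
      rfl
  simp only [hrw]
  refine PolyFun.det _ fun i j => ?_
  by_cases h : (i : ℕ) < r.1
  · simp only [if_pos h]
    exact PolyFun.sum _ _ fun c' _ => (PolyFun.coord _).mul (PolyFun.coord _)
  · simp only [if_neg h]
    exact PolyFun.coord _

lemma polyFun_inner_gsV_const (r : Fin d) (z : E d) :
    PolyFun (fun x : Fin d × Fin d → ℝ => ⟪gsV (worow x) r, z⟫) := by
  have : ∀ x : Fin d × Fin d → ℝ, ⟪gsV (worow x) r, z⟫
      = ∑ c, gsV (worow x) r c * z c := fun x => inner_euc _ _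
  simp only [this]
  exact PolyFun.sum _ _ fun c _ => (polyFun_gsV_apply r c).mul (PolyFun.const (z c))

lemma polyFun_Mmat (k : ℕ) (T : Finset (E d)) (a : Fin (d - 2 * k)) (i : Fin (T.card - 1)) :
    PolyFun (fun x : Fin d × Fin d → ℝ => Mmat k T (worow x) a i) := by
  by_cases h : (a : ℕ) + 2 * k < d
  · simp only [Mmat, Matrix.of_apply, dif_pos h]
    exact polyFun_inner_gsV_const _ _
  · simp only [Mmat, Matrix.of_apply, dif_neg h]
    exact PolyFun.const 0

lemma polyFun_condF (k : ℕ) (T : Finset (E d)) : PolyFun (condF k T) := by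
  have h1 : PolyFun (fun x : Fin d × Fin d → ℝ =>
      ∏ r : Fin d, ⟪gsV (worow x) r, gsV (worow x) r⟫) := by
    refine PolyFun.prod _ _ fun r _ => ?_
    have : ∀ x : Fin d × Fin d → ℝ, ⟪gsV (worow x) r, gsV (worow x) r⟫
        = ∑ c, gsV (worow x) r c * gsV (worow x) r c := fun x => inner_euc _ _
    simp only [this]
    exact PolyFun.sum _ _ fun c _ => (polyFun_gsV_apply r c).mul (polyFun_gsV_apply r c)
  have h2 : PolyFun (fun x : Fin d × Fin d → ℝ =>
      ((Mmat k T (worow x))ᵀ * Mmat k T (worow x)).det) := by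
    have hrw : ∀ x : Fin d × Fin d → ℝ, ((Mmat k T (worow x))ᵀ * Mmat k T (worow x)).det
        = Matrix.det (Matrix.of fun i j : Fin (T.card - 1) =>
            (fun i j : Fin (T.card - 1) => fun y : Fin d × Fin d → ℝ =>
              ∑ a, Mmat k T (worow y) a i * Mmat k T (worow y) a j) i j x) := by
      intro x
      refine congrArg Matrix.det ?_
      funext i j
      simp [Matrix.mul_apply, Matrix.transpose_apply]
    simp only [hrw]
    exact PolyFun.det _ fun i j =>
      PolyFun.sum _ _ fun a _ => (polyFun_Mmat k T a i).mul (polyFun_Mmat k T a j)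
  exact h1.mul h2

lemma uT_linearIndependent (T : Finset (E d))
    (hAI : AffineIndependent ℝ (fun x : T => (x : E d))) :
    LinearIndependent ℝ (uT T) := by
  classical
  rcases Nat.eq_zero_or_pos T.card with h0 | hpos
  · have : IsEmpty (Fin (T.card - 1)) := by rw [h0]; exact Fin.isEmpty'
    exact linearIndependent_empty_type
  · have hN : T.card = (T.card - 1) + 1 := by omega
    have hAI' : AffineIndependent ℝ (fun i : Fin T.card => (T.equivFin.symm i : E d)) :=
      (affineIndependent_equiv T.equivFin.symm).2 hAI
    have hAI'' : AffineIndependent ℝ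
        ((fun i : Fin T.card => (T.equivFin.symm i : E d)) ∘ (finCongr hN).symm) :=
      (affineIndependent_equiv (finCongr hN).symm).2 hAI'
    set pc : Fin ((T.card - 1) + 1) → E d :=
      (fun i : Fin T.card => (T.equivFin.symm i : E d)) ∘ (finCongr hN).symm with hpc
    have hli := (affineIndependent_iff_linearIndependent_vsub ℝ pc 0).1 hAI''
    have hemb : Function.Injective
        (fun j : Fin (T.card - 1) =>
          (⟨j.succ, Fin.succ_ne_zero j⟩ : {i : Fin ((T.card - 1) + 1) // i ≠ 0})) := by
      intro a b hab
      have := congrArg Subtype.val hab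
      exact Fin.succ_injective _ this
    have hcomp := hli.comp _ hemb
    have heq : uT T = (fun i : {x : Fin ((T.card - 1) + 1) // x ≠ 0} => pc i -ᵥ pc 0)
        ∘ (fun j : Fin (T.card - 1) =>
          (⟨j.succ, Fin.succ_ne_zero j⟩ : {i : Fin ((T.card - 1) + 1) // i ≠ 0})) := by
      funext j
      have hj1 : (j : ℕ) + 1 < T.card := by have := j.isLt; omega
      have h0T : 0 < T.card := hpos
      show ptT T (j.1 + 1) - ptT T 0 = _
      simp only [Function.comp_apply, vsub_eq_sub]
      congr 1
      · rw [ptT, dif_pos hj1, hpc]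
        simp only [Function.comp_apply]
        congr 2 <;> simp [Fin.ext_iff]
      · rw [ptT, dif_pos h0T, hpc]
        simp only [Function.comp_apply]
        congr 2 <;> simp [Fin.ext_iff]
    rw [heq]
    exact hcomp

end Stmt16

open Stmt16

/-- For every finite set `S ⊆ ℝ^d` in general position there is an
orthogonal (inner-product–preserving) linear map `A : ℝ^d → ℝ^d` such that `A(S)` has
the strong general position property. -/
theorem stmt_16 (d : ℕ) (S : Finset (EuclideanSpace ℝ (Fin d)))
    (hgen : InGenPos d ↑S) :
    ∃ A : EuclideanSpace ℝ (Fin d) ≃ₗᵢ[ℝ] EuclideanSpace ℝ (Fin d),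
      SGPP d (⇑A '' ↑S) := by
  classical
  set conds : Finset (ℕ × Finset (E d)) :=
    insert (0, (∅ : Finset (E d)))
      (((Finset.range (d + 1)) ×ˢ S.powerset).filter
        fun p => 1 ≤ p.1 ∧ 1 ≤ d - 2 * p.1 ∧ p.2.card ≤ d - 2 * p.1 + 1) with hconds
  -- each condition function has a point where it does not vanish
  have hwit : ∀ p ∈ conds, ∃ x, condF p.1 p.2 x ≠ 0 := by
    rintro ⟨k, T⟩ hp
    rw [hconds, Finset.mem_insert] at hp
    rcases hp with hp | hp
    · -- the trivial condition: use the standard orthonormal basis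
      have hk : k = 0 := congrArg Prod.fst hp
      have hT : T = (∅ : Finset (E d)) := congrArg Prod.snd hp
      subst hk; subst hT
      refine ⟨fun q => (EuclideanSpace.basisFun (Fin d) ℝ) q.1 q.2, ?_⟩
      set x₀ : Fin d × Fin d → ℝ := fun q => (EuclideanSpace.basisFun (Fin d) ℝ) q.1 q.2
      have hwx : worow x₀ = fun i => (EuclideanSpace.basisFun (Fin d) ℝ) i := by
        funext i; exact PiLp.ext fun c => rfl
      have hon : Orthonormal ℝ (worow x₀) := by
        rw [hwx]; exact (EuclideanSpace.basisFun (Fin d) ℝ).orthonormal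
      have hie : IsEmpty (Fin ((∅ : Finset (E d)).card - 1)) := by
        rw [Finset.card_empty]; exact Fin.isEmpty'
      simp only [condF]
      rw [@Matrix.det_isEmpty _ _ _ _ _ hie, mul_one]
      refine Finset.prod_ne_zero_iff.2 fun r _ => ?_
      rw [inner_gsV_self_of_orthonormal _ hon]
      norm_num
    · rw [Finset.mem_filter] at hp
      obtain ⟨hmem, hk1, hdk, hcard⟩ := hp
      have hk1' : 1 ≤ k := hk1
      have hdk' : 1 ≤ d - 2 * k := hdk
      have hcard' : T.card ≤ d - 2 * k + 1 := hcard
      clear hk1 hdk hcard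
      have hTS : T ⊆ S := Finset.mem_powerset.1 (Finset.mem_product.1 hmem).2
      have hAI : AffineIndependent ℝ (fun x : T => (x : E d)) :=
        hgen T hTS (by omega)
      have hu : LinearIndependent ℝ (uT T) := uT_linearIndependent T hAI
      have hmk : (T.card - 1) + 2 * k ≤ d := by omega
      obtain ⟨w₀, hw₀on, hw₀ker⟩ := exists_witness_frame (uT T) hu hmk
      refine ⟨fun q => w₀ q.1 q.2, ?_⟩
      set x₀ : Fin d × Fin d → ℝ := fun q => w₀ q.1 q.2
      have hwx : worow x₀ = w₀ := by funext i; exact PiLp.ext fun c => rfl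
      simp only [condF, hwx]
      refine mul_ne_zero ?_ ?_
      · refine Finset.prod_ne_zero_iff.2 fun r _ => ?_
        rw [inner_gsV_self_of_orthonormal _ hw₀on]
        norm_num
      · rw [det_transpose_mul_self_ne_zero_iff]
        intro cv hcv
        refine hw₀ker cv ?_
        intro a h2k
        have hlow : (a : ℕ) - 2 * k < d - 2 * k := by have := a.isLt; omega
        have hMva := congrFun hcv ⟨(a : ℕ) - 2 * k, hlow⟩
        have hidx : ((⟨(a : ℕ) - 2 * k, hlow⟩ : Fin (d - 2 * k)) : ℕ) + 2 * k < d := by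
          have := a.isLt; simp only []; omega
        have hsum : (Mmat k T w₀).mulVec cv ⟨(a : ℕ) - 2 * k, hlow⟩
            = ⟪w₀ a, ∑ i, cv i • uT T i⟫ := by
          rw [Matrix.mulVec, dotProduct, inner_sum]
          refine Finset.sum_congr rfl fun i _ => ?_
          rw [real_inner_smul_right]
          simp only [Mmat, Matrix.of_apply, dif_pos hidx]
          rw [gsV_of_orthonormal _ hw₀on]
          have : (⟨((⟨(a : ℕ) - 2 * k, hlow⟩ : Fin (d - 2 * k)) : ℕ) + 2 * k, hidx⟩ : Fin d)
              = a := by simp only [Fin.ext_iff]; omega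
          rw [this, mul_comm]
        rw [hsum] at hMva
        rw [hMva]
        rfl
  obtain ⟨x, hx⟩ := PolyFun.exists_forall_ne_zero conds (fun p => condF p.1 p.2)
    (fun p _ => polyFun_condF p.1 p.2) hwit
  have hzero : ((0, (∅ : Finset (E d))) : ℕ × Finset (E d)) ∈ conds :=
    Finset.mem_insert_self _ _
  have hx0 := hx _ hzero
  simp only [condF] at hx0
  have hnormprod : (∏ r : Fin d, ⟪gsV (worow x) r, gsV (worow x) r⟫) ≠ 0 :=
    fun h0 => hx0 (by rw [h0, zero_mul])
  set w : Fin d → E d := worow x with hw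
  have hinners : ∀ r : Fin d, ⟪gsV w r, gsV w r⟫ ≠ 0 := fun r =>
    Finset.prod_ne_zero_iff.1 hnormprod r (Finset.mem_univ r)
  have hnorm : ∀ r, ‖gsV w r‖ ≠ 0 := by
    intro r h0
    exact hinners r (by rw [real_inner_self_eq_norm_sq, h0]; norm_num)
  set e : Fin d → E d := fun r => (‖gsV w r‖)⁻¹ • gsV w r with he
  have horth : Orthonormal ℝ e := by
    rw [orthonormal_iff_ite]
    intro i j
    rw [he]
    simp only []
    rw [real_inner_smul_left, real_inner_smul_right]
    rcases eq_or_ne i j with rfl | hij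
    · rw [if_pos rfl, real_inner_self_eq_norm_mul_norm]
      have hni := hnorm i
      field_simp
    · rw [if_neg hij]
      have hvij : (i : ℕ) ≠ (j : ℕ) := fun hv => hij (Fin.ext hv)
      rcases lt_or_gt_of_ne hvij with h | h
      · rw [real_inner_comm, inner_gsV_gsV w j i h, mul_zero, mul_zero]
      · rw [inner_gsV_gsV w i j h, mul_zero, mul_zero]
  have hspan : ⊤ ≤ Submodule.span ℝ (Set.range e) := by
    rw [horth.linearIndependent.span_eq_top_of_card_eq_finrank'
      (by simp [finrank_euclideanSpace_fin])]
  set b : OrthonormalBasis (Fin d) ℝ (E d) := OrthonormalBasis.mk horth hspan with hb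
  refine ⟨b.repr, ?_, ?_⟩
  · -- general position of the image
    intro s hs hcard
    refine affine_transfer (⇑b.repr) S s hs fun T hTS hTcard => ?_
    have hAI : AffineIndependent ℝ (fun x : T => (x : E d)) :=
      hgen T hTS (by omega)
    have hAI' : AffineIndependent ℝ (fun i : Fin T.card => (T.equivFin.symm i : E d)) :=
      (affineIndependent_equiv T.equivFin.symm).2 hAI
    have := hAI'.map' (b.repr.toLinearEquiv.toLinearMap.toAffineMap) b.repr.injective
    exact this
  · -- general position of the projections
    intro k hk1 hdk s hs hcard
    rw [Set.image_image] at hs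
    refine affine_transfer (fun z => proj2k d k (b.repr z)) S s hs fun T hTS hTcard => ?_
    have hkc : (k, T) ∈ conds := by
      rw [hconds]
      refine Finset.mem_insert_of_mem (Finset.mem_filter.2
        ⟨Finset.mem_product.2 ⟨Finset.mem_range.2 (by omega), Finset.mem_powerset.2 hTS⟩,
          hk1, hdk, ?_⟩)
      show T.card ≤ d - 2 * k + 1
      omega
    have hxkT := hx _ hkc
    simp only [condF] at hxkT
    have hdet : ((Mmat k T (worow x))ᵀ * Mmat k T (worow x)).det ≠ 0 :=
      fun h0 => hxkT (by rw [h0, mul_zero])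
    have hMker := (det_transpose_mul_self_ne_zero_iff _).1 hdet
    rcases Nat.eq_zero_or_pos T.card with h0 | hpos
    · have : Subsingleton (Fin T.card) := by rw [h0]; infer_instance
      exact affineIndependent_of_subsingleton _ _
    · have hN : T.card = (T.card - 1) + 1 := by omega
      set pc : Fin ((T.card - 1) + 1) → EuclideanSpace ℝ (Fin (d - 2 * k)) :=
        (fun i : Fin T.card => proj2k d k (b.repr (T.equivFin.symm i : E d)))
          ∘ (finCongr hN).symm with hpc
      have hφ : ∀ (z : E d) (a : Fin (d - 2 * k)),
          proj2k d k (b.repr z) a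
            = (‖gsV w ⟨(a : ℕ) + 2 * k, by have := a.isLt; omega⟩‖)⁻¹
              * ⟪gsV w ⟨(a : ℕ) + 2 * k, by have := a.isLt; omega⟩, z⟫ := by
        intro z a
        show b.repr z _ = _
        rw [b.repr_apply_apply]
        rw [hb, OrthonormalBasis.coe_mk, he]
        rw [real_inner_smul_left]
      have hAIpc : AffineIndependent ℝ pc := by
        refine affine_of_matrix pc (Mmat k T (worow x))
          (fun a => (‖gsV w ⟨(a : ℕ) + 2 * k, by have := a.isLt; omega⟩‖)⁻¹)
          (fun a => inv_ne_zero (hnorm _)) hMker ?_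
        intro j a
        have hja : (j : ℕ) + 1 < T.card := by have := j.isLt; omega
        have h0T : 0 < T.card := hpos
        have hidx : (a : ℕ) + 2 * k < d := by have := a.isLt; omega
        have hp1 : pc j.succ = proj2k d k (b.repr (ptT T ((j : ℕ) + 1))) := by
          rw [hpc]
          simp only [Function.comp_apply]
          congr 2
          rw [ptT, dif_pos hja]
          congr 1 <;> simp [Fin.ext_iff]
        have hp0 : pc 0 = proj2k d k (b.repr (ptT T 0)) := by
          rw [hpc]
          simp only [Function.comp_apply]
          congr 2
          rw [ptT, dif_pos h0T]
          congr 1 <;> simp [Fin.ext_iff]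
        rw [hp1, hp0, PiLp.sub_apply, hφ, hφ]
        rw [← mul_sub, ← inner_sub_right]
        congr 1
        simp only [Mmat, Matrix.of_apply, dif_pos hidx]
        rfl
      rw [hpc] at hAIpc
      exact (affineIndependent_equiv (finCongr hN).symm).1 hAIpc
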